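/- Assume int S ≠ ∅ and that the collection (u ↦ G_u(x))_{x∈X} is uniformly S⁺-concave, i.e. for all u₁, u₂ ∈ 𝒰 and λ₁, λ₂ ∈ S⁺ there exist ū ∈ 𝒰 and λ̄ ∈ S⁺ such that λ₁(G_{u₁}(x)) + λ₂(G_{u₂}(x)) ≤ λ̄(G_ū(x)) for all x ∈ X. Then the robust moment cone 𝓜₀ is a convex subset of X*×ℝ. -/

import Mathlib

open Pointwise

/-- Proposition 2.2(i): if int S ≠ ∅ and the collection (u ↦ G_u(x))_{x∈X} is uniformly
S⁺-concave, then the robust moment cone 𝓜₀ is convex. -/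
theorem stmt4
    {X Z W : Type*}
    [AddCommGroup X] [Module ℝ X] [TopologicalSpace X] [IsTopologicalAddGroup X]
    [ContinuousSMul ℝ X] [LocallyConvexSpace ℝ X] [T2Space X]
    [AddCommGroup Z] [Module ℝ Z] [TopologicalSpace Z] [IsTopologicalAddGroup Z]
    [ContinuousSMul ℝ Z] [LocallyConvexSpace ℝ Z] [T2Space Z]
    [AddCommGroup W] [Module ℝ W] [TopologicalSpace W] [IsTopologicalAddGroup W]
    [ContinuousSMul ℝ W]
    (S : Set Z) (hS_ne : S.Nonempty) (hS_closed : IsClosed S) (hS_conv : Convex ℝ S)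
    (hS_cone : ∀ r : ℝ, 0 ≤ r → ∀ z ∈ S, r • z ∈ S)
    (hS_int : (interior S).Nonempty)
    (U : Set W) (hU : U.Nonempty) (G : W → X → Z)
    (hG_conv : ∀ u ∈ U, Convex ℝ {p : X × Z | p.2 - G u p.1 ∈ S})
    (hG_closed : ∀ u ∈ U, IsClosed {p : X × Z | p.2 - G u p.1 ∈ S})
    (hconc : ∀ u₁ ∈ U, ∀ u₂ ∈ U, ∀ l₁ l₂ : WeakDual ℝ Z,
      (∀ z ∈ S, 0 ≤ l₁ z) → (∀ z ∈ S, 0 ≤ l₂ z) →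
      ∃ u₃ ∈ U, ∃ l₃ : WeakDual ℝ Z, (∀ z ∈ S, 0 ≤ l₃ z) ∧
        ∀ x : X, l₁ (G u₁ x) + l₂ (G u₂ x) ≤ l₃ (G u₃ x)) :
    Convex ℝ (⋃ u ∈ U, ⋃ l ∈ {l : WeakDual ℝ Z | ∀ z ∈ S, 0 ≤ l z},
      {q : WeakDual ℝ X × ℝ | ∀ x : X, q.1 x - l (G u x) ≤ q.2}) := by
  rintro p hp q hq a b ha hb hab
  simp only [Set.mem_iUnion] at hp hq ⊢
  obtain ⟨u₁, hu₁, l₁, hl₁, hp⟩ := hp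
  obtain ⟨u₂, hu₂, l₂, hl₂, hq⟩ := hq
  obtain ⟨u₃, hu₃, l₃, hl₃, hle⟩ := hconc u₁ hu₁ u₂ hu₂ (a • l₁) (b • l₂)
    (fun z hz => mul_nonneg ha (hl₁ z hz)) (fun z hz => mul_nonneg hb (hl₂ z hz))
  refine ⟨u₃, hu₃, l₃, hl₃, fun x => ?_⟩
  have h1 : a * (p.1 x) - a * (l₁ (G u₁ x)) ≤ a * p.2 := by
    have := hp x
    nlinarith [hp x]
  have h2 : b * (q.1 x) - b * (l₂ (G u₂ x)) ≤ b * q.2 := by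
    nlinarith [hq x]
  have h3 : a * l₁ (G u₁ x) + b * l₂ (G u₂ x) ≤ l₃ (G u₃ x) := hle x
  have h4 : (a • p + b • q).1 x = a * p.1 x + b * q.1 x := rfl
  have h5 : (a • p + b • q).2 = a * p.2 + b * q.2 := rfl
  simp only [Set.mem_setOf_eq, h4, h5]
  linarith
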